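/- Counting Whitney intervals near the Cantor set: Fix N ≥ 1 and let E be a set consisting of a closed construction interval of the ternary Cantor set of length ℓ together with an adjacent gap of length ℓ (so |E| = 2ℓ). With the Whitney decomposition in which each gap L of the Cantor set contains exactly two Whitney intervals of length 3^{-l}|L| for each l ≥ 1, the set E contains exactly 2^k Whitney intervals of length 2^{-1}·3^{-k}|E| for each k ≥ 1, and hence the total length of Whitney intervals in E of length 2^{-1}·3^{-k}|E| equals (1/2)·(2/3)^k·|E|. -/
import Mathlib


open Set

/-- The classical middle-thirds Cantor set. -/
noncomputable def cantorK : Set ℝ :=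
  {x : ℝ | ∃ a : ℕ → ℝ, (∀ n, a n = 0 ∨ a n = 2) ∧ x = ∑' n, a n / 3 ^ (n + 1)}

/-- The Cantor set scaled to `[0, ℓ]`. -/
def scaledCantor (ℓ : ℝ) : Set ℝ := (fun t : ℝ => ℓ * t) '' cantorK

/-- The gaps of the scaled Cantor set: the connected components of `(0,ℓ) ∖ ℓK`. -/
def gapsIn (ℓ : ℝ) : Set (Set ℝ) :=
  {L | ∃ x ∈ Set.Ioo 0 ℓ \ scaledCantor ℓ,
    L = connectedComponentIn (Set.Ioo 0 ℓ \ scaledCantor ℓ) x}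

/-- The Whitney intervals of a gap `(a,b)`: two intervals of length `3^{-n}(b−a)` for each
`n ≥ 1`, adjoined from the middle outwards. -/
def whitneyOf (a b : ℝ) : Set (Set ℝ) :=
  {J | ∃ n : ℕ, 1 ≤ n ∧
    (J = Set.Icc (b - 3 ^ (-(n : ℤ) + 1) * (b - a) / 2) (b - 3 ^ (-(n : ℤ)) * (b - a) / 2) ∨
     J = Set.Icc (a + 3 ^ (-(n : ℤ)) * (b - a) / 2) (a + 3 ^ (-(n : ℤ) + 1) * (b - a) / 2))}

/-- The Whitney intervals of `E = [0,ℓ] ∪ [ℓ,2ℓ]`, where `[0,ℓ]` carries a scaled copy of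
the Cantor set (with Whitney intervals in each of its gaps) and `(ℓ,2ℓ)` is an adjacent
gap (with its own Whitney intervals). -/
def whitneyE (ℓ : ℝ) : Set (Set ℝ) :=
  {J | (∃ L ∈ gapsIn ℓ, ∃ a b : ℝ, L = Set.Ioo a b ∧ J ∈ whitneyOf a b) ∨
    J ∈ whitneyOf ℓ (2 * ℓ)}

lemma digit_nonneg {a : ℕ → ℝ} (ha : ∀ n, a n = 0 ∨ a n = 2) (n : ℕ) : 0 ≤ a n := by
  rcases ha n with h | h <;> rw [h] <;> norm_num

lemma digit_le {a : ℕ → ℝ} (ha : ∀ n, a n = 0 ∨ a n = 2) (n : ℕ) : a n ≤ 2 := by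
  rcases ha n with h | h <;> rw [h] <;> norm_num

lemma geom_summable : Summable (fun n : ℕ => (2:ℝ) / 3 ^ (n + 1)) := by
  have : (fun n : ℕ => (2:ℝ) / 3 ^ (n + 1)) = fun n : ℕ => (2/3) * (1/3)^n := by
    funext n; rw [div_pow]; ring
  rw [this]
  exact (summable_geometric_of_lt_one (by norm_num) (by norm_num)).mul_left _

lemma geom_tsum : ∑' n : ℕ, (2:ℝ) / 3 ^ (n + 1) = 1 := by
  have h : (fun n : ℕ => (2:ℝ) / 3 ^ (n + 1)) = fun n : ℕ => (2/3) * (1/3)^n := by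
    funext n; rw [div_pow]; ring
  rw [h, tsum_mul_left, tsum_geometric_of_lt_one (by norm_num) (by norm_num)]
  norm_num

lemma cantor_summable {a : ℕ → ℝ} (ha : ∀ n, a n = 0 ∨ a n = 2) :
    Summable (fun n => a n / 3 ^ (n + 1)) := by
  apply Summable.of_nonneg_of_le
    (fun n => div_nonneg (digit_nonneg ha n) (by positivity)) _ geom_summable
  intro n
  gcongr
  exact digit_le ha n

lemma cantor_tsum_nonneg {a : ℕ → ℝ} (ha : ∀ n, a n = 0 ∨ a n = 2) :
    0 ≤ ∑' n, a n / 3 ^ (n + 1) :=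
  tsum_nonneg (fun n => div_nonneg (digit_nonneg ha n) (by positivity))

lemma cantor_tsum_le_one {a : ℕ → ℝ} (ha : ∀ n, a n = 0 ∨ a n = 2) :
    ∑' n, a n / 3 ^ (n + 1) ≤ 1 := by
  calc ∑' n, a n / 3 ^ (n + 1) ≤ ∑' n : ℕ, (2:ℝ) / 3 ^ (n + 1) := by
        apply Summable.tsum_le_tsum _ (cantor_summable ha) geom_summable
        intro n
        gcongr
        exact digit_le ha n
    _ = 1 := geom_tsum

lemma key_shift {a : ℕ → ℝ} (ha : ∀ n, a n = 0 ∨ a n = 2) :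
    ∑' n, a n / 3 ^ (n + 1) = a 0 / 3 + (∑' n, a (n + 1) / 3 ^ (n + 1)) / 3 := by
  rw [Summable.tsum_eq_zero_add (cantor_summable ha)]
  congr 1
  · norm_num
  · have h : ∀ n : ℕ, a (n + 1) / 3 ^ (n + 1 + 1) = (a (n + 1) / 3 ^ (n + 1)) * (1/3) := by
      intro n; rw [pow_succ (3:ℝ) (n+1)]; ring
    rw [tsum_congr h, tsum_mul_right]
    ring

lemma zero_mem_cantor : (0:ℝ) ∈ cantorK := by
  refine ⟨fun _ => 0, fun n => Or.inl rfl, ?_⟩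
  simp

lemma third_mem_cantor : (1/3:ℝ) ∈ cantorK := by
  refine ⟨fun n => if n = 0 then 0 else 2, fun n => by by_cases h : n = 0 <;> simp [h], ?_⟩
  have ha : ∀ n, (fun n => if n = 0 then (0:ℝ) else 2) n = 0 ∨ (fun n => if n = 0 then (0:ℝ) else 2) n = 2 := fun n => by by_cases h : n = 0 <;> simp [h]
  rw [key_shift ha]
  simp only [if_pos rfl]
  have : ∀ n : ℕ, (if n + 1 = 0 then (0:ℝ) else 2) = 2 / 3 ^ (n+1) * 3 ^ (n+1) := by
    intro n
    rw [if_neg (Nat.succ_ne_zero n)]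
    field_simp
  have h2 : (∑' n : ℕ, (if n + 1 = 0 then (0:ℝ) else 2) / 3 ^ (n+1)) = ∑' n : ℕ, (2:ℝ) / 3^(n+1) := by
    apply tsum_congr
    intro n
    rw [if_neg (Nat.succ_ne_zero n)]
  rw [h2, geom_tsum]
  norm_num

lemma twothird_mem_cantor : (2/3:ℝ) ∈ cantorK := by
  refine ⟨fun n => if n = 0 then 2 else 0, fun n => by by_cases h : n = 0 <;> simp [h], ?_⟩
  have ha : ∀ n, (fun n => if n = 0 then (2:ℝ) else 0) n = 0 ∨ (fun n => if n = 0 then (2:ℝ) else 0) n = 2 := fun n => by by_cases h : n = 0 <;> simp [h]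
  rw [key_shift ha]
  simp only [if_pos rfl]
  have h2 : (∑' n : ℕ, (if n + 1 = 0 then (2:ℝ) else 0) / 3 ^ (n+1)) = ∑' n : ℕ, (0:ℝ) := by
    apply tsum_congr
    intro n
    rw [if_neg (Nat.succ_ne_zero n)]
    simp
  rw [h2]
  simp

lemma cantor_subset : cantorK ⊆ Set.Icc 0 1 := by
  rintro x ⟨a, ha, rfl⟩
  exact ⟨cantor_tsum_nonneg ha, cantor_tsum_le_one ha⟩

lemma cantor_selfsim :
    cantorK = (fun y : ℝ => y / 3) '' cantorK ∪ (fun y : ℝ => (y + 2) / 3) '' cantorK := by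
  ext x
  constructor
  · rintro ⟨a, ha, rfl⟩
    have hy : (∑' n, a (n + 1) / 3 ^ (n + 1)) ∈ cantorK :=
      ⟨fun n => a (n + 1), fun n => ha (n + 1), rfl⟩
    rcases ha 0 with h0 | h0
    · left
      exact ⟨_, hy, by rw [key_shift ha, h0]; ring⟩
    · right
      exact ⟨_, hy, by rw [key_shift ha, h0]; ring⟩
  · rintro (⟨y, ⟨b, hb, rfl⟩, rfl⟩ | ⟨y, ⟨b, hb, rfl⟩, rfl⟩)
    · refine ⟨fun n => match n with | 0 => (0:ℝ) | m+1 => b m, fun n => by cases n with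
        | zero => exact Or.inl rfl
        | succ m => exact hb m, ?_⟩
      have ha' : ∀ n, (fun n => match n with | 0 => (0:ℝ) | m+1 => b m) n = 0 ∨ (fun n => match n with | 0 => (0:ℝ) | m+1 => b m) n = 2 := by
        intro n
        cases n with
        | zero => exact Or.inl rfl
        | succ m => exact hb m
      rw [key_shift ha']
      simp
    · refine ⟨fun n => match n with | 0 => (2:ℝ) | m+1 => b m, fun n => by cases n with
        | zero => exact Or.inr rfl
        | succ m => exact hb m, ?_⟩
      have ha' : ∀ n, (fun n => match n with | 0 => (2:ℝ) | m+1 => b m) n = 0 ∨ (fun n => match n with | 0 => (2:ℝ) | m+1 => b m) n = 2 := by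
        intro n
        cases n with
        | zero => exact Or.inr rfl
        | succ m => exact hb m
      rw [key_shift ha']
      have he : (∑' n:ℕ, (match n+1 with | 0 => (2:ℝ) | m+1 => b m) / 3^(n+1)) = ∑' n:ℕ, b n / 3^(n+1) := rfl
      rw [he]
      ring

def Uset (ℓ : ℝ) : Set ℝ := Set.Ioo 0 ℓ \ scaledCantor ℓ

lemma scaled_subset {ℓ : ℝ} (hℓ : 0 ≤ ℓ) : scaledCantor ℓ ⊆ Icc 0 ℓ := by
  rintro x ⟨t, ht, rfl⟩
  obtain ⟨h0, h1⟩ := cantor_subset ht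
  exact ⟨by positivity, by simpa using mul_le_of_le_one_right hℓ h1⟩

lemma scaled_selfsim (ℓ : ℝ) :
    scaledCantor ℓ = scaledCantor (ℓ/3) ∪ (· + 2*ℓ/3) '' scaledCantor (ℓ/3) := by
  unfold scaledCantor
  conv_lhs => rw [cantor_selfsim]
  rw [image_union, image_image, image_image, image_image]
  congr 1
  · apply image_congr
    intro t _
    ring
  · apply image_congr
    intro t _
    ring

lemma third_mem_scaled (ℓ : ℝ) : ℓ/3 ∈ scaledCantor ℓ :=
  ⟨1/3, third_mem_cantor, by ring⟩

lemma twothird_mem_scaled (ℓ : ℝ) : 2*ℓ/3 ∈ scaledCantor ℓ :=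
  ⟨2/3, twothird_mem_cantor, by ring⟩

lemma scaled_middle_disj {ℓ : ℝ} (hℓ : 0 < ℓ) :
    scaledCantor ℓ ∩ Ioo (ℓ/3) (2*ℓ/3) = ∅ := by
  rw [scaled_selfsim]
  ext x
  simp only [mem_inter_iff, mem_union, mem_empty_iff_false, iff_false, not_and]
  rintro (hx | ⟨y, hy, rfl⟩) ⟨h1, h2⟩
  · have := (scaled_subset (by linarith : (0:ℝ) ≤ ℓ/3) hx).2
    linarith
  · have := (scaled_subset (by linarith : (0:ℝ) ≤ ℓ/3) hy).1
    linarith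

lemma U_subset (ℓ : ℝ) : Uset ℓ ⊆ Ioo 0 ℓ := diff_subset

lemma U_inter_left {ℓ : ℝ} (hℓ : 0 < ℓ) : Uset ℓ ∩ Ioo 0 (ℓ/3) = Uset (ℓ/3) := by
  ext x
  simp only [Uset, mem_inter_iff, mem_diff, mem_Ioo]
  constructor
  · rintro ⟨⟨⟨h0, hl⟩, hK⟩, h0', h3⟩
    refine ⟨⟨h0, h3⟩, fun hx => hK ?_⟩
    rw [scaled_selfsim]
    exact Or.inl hx
  · rintro ⟨⟨h0, h3⟩, hK⟩
    refine ⟨⟨⟨h0, by linarith⟩, fun hx => ?_⟩, h0, h3⟩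
    rw [scaled_selfsim] at hx
    rcases hx with hx | ⟨y, hy, rfl⟩
    · exact hK hx
    · have := (scaled_subset (by linarith : (0:ℝ) ≤ ℓ/3) hy).1
      linarith

lemma U_inter_mid {ℓ : ℝ} (hℓ : 0 < ℓ) :
    Uset ℓ ∩ Ioo (ℓ/3) (2*ℓ/3) = Ioo (ℓ/3) (2*ℓ/3) := by
  apply inter_eq_self_of_subset_right
  intro x hx
  obtain ⟨h1, h2⟩ := hx
  refine ⟨⟨by linarith, by linarith⟩, fun hK => ?_⟩
  have : x ∈ scaledCantor ℓ ∩ Ioo (ℓ/3) (2*ℓ/3) := ⟨hK, h1, h2⟩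
  rw [scaled_middle_disj hℓ] at this
  exact this

lemma U_inter_right {ℓ : ℝ} (hℓ : 0 < ℓ) :
    Uset ℓ ∩ Ioo (2*ℓ/3) ℓ = (· + 2*ℓ/3) '' Uset (ℓ/3) := by
  ext x
  simp only [Uset, mem_inter_iff, mem_diff, mem_Ioo, mem_image]
  constructor
  · rintro ⟨⟨⟨h0, hl⟩, hK⟩, h2, h3⟩
    refine ⟨x - 2*ℓ/3, ⟨⟨by linarith, by linarith⟩, fun hx => hK ?_⟩, by ring⟩
    rw [scaled_selfsim]
    exact Or.inr ⟨x - 2*ℓ/3, hx, by ring⟩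
  · rintro ⟨y, ⟨⟨h0, h3⟩, hK⟩, rfl⟩
    refine ⟨⟨⟨by linarith, by linarith⟩, fun hx => ?_⟩, by linarith, by linarith⟩
    rw [scaled_selfsim] at hx
    rcases hx with hx | ⟨z, hz, hzeq⟩
    · have := (scaled_subset (by linarith : (0:ℝ) ≤ ℓ/3) hx).2
      linarith
    · have : z = y := by dsimp at hzeq; linarith
      exact hK (this ▸ hz)

lemma comp_loc {s : Set ℝ} {x c d : ℝ} (hx : x ∈ Ioo c d) (hc : c ∉ s) (hd : d ∉ s) :
    connectedComponentIn s x = connectedComponentIn (s ∩ Ioo c d) x := by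
  by_cases hxs : x ∈ s
  · apply Subset.antisymm
    · set C := connectedComponentIn s x with hC
      have hCpre : IsPreconnected C := isPreconnected_connectedComponentIn
      have hCord : OrdConnected C := hCpre.ordConnected
      have hCs : C ⊆ s := connectedComponentIn_subset s x
      have hxC : x ∈ C := mem_connectedComponentIn hxs
      have hsub : C ⊆ Ioo c d := by
        intro y hy
        constructor
        · by_contra h
          push_neg at h
          rcases eq_or_lt_of_le h with h' | h'
          · exact hc (hCs (h' ▸ hy))
          · exact hc (hCs (hCord.out hy hxC ⟨h'.le, hx.1.le⟩))
        · by_contra h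
          push_neg at h
          rcases eq_or_lt_of_le h with h' | h'
          · exact hd (hCs (h' ▸ hy))
          · exact hd (hCs (hCord.out hxC hy ⟨hx.2.le, h'.le⟩))
      exact hCpre.subset_connectedComponentIn hxC (subset_inter hCs hsub)
    · exact connectedComponentIn_mono x inter_subset_left
  · rw [connectedComponentIn_eq_empty hxs, connectedComponentIn_eq_empty (fun h => hxs h.1)]

lemma comp_Ioo {s : Set ℝ} {a b x : ℝ} (hsub : Ioo a b ⊆ s) (ha : a ∉ s) (hb : b ∉ s)
    (hx : x ∈ Ioo a b) : connectedComponentIn s x = Ioo a b := by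
  apply Subset.antisymm
  · set C := connectedComponentIn s x with hC
    have hCpre : IsPreconnected C := isPreconnected_connectedComponentIn
    have hCord : OrdConnected C := hCpre.ordConnected
    have hCs : C ⊆ s := connectedComponentIn_subset s x
    have hxC : x ∈ C := mem_connectedComponentIn (hsub hx)
    intro y hy
    constructor
    · by_contra h
      push_neg at h
      rcases eq_or_lt_of_le h with h' | h'
      · exact ha (hCs (h' ▸ hy))
      · exact ha (hCs (hCord.out hy hxC ⟨h'.le, hx.1.le⟩))
    · by_contra h
      push_neg at h
      rcases eq_or_lt_of_le h with h' | h'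
      · exact hb (hCs (h' ▸ hy))
      · exact hb (hCs (hCord.out hxC hy ⟨hx.2.le, h'.le⟩))
  · exact isPreconnected_Ioo.subset_connectedComponentIn hx hsub

lemma compTranslate17 (c : ℝ) (s : Set ℝ) (x : ℝ) (hx : x ∈ s) :
    connectedComponentIn ((· + c) '' s) (x + c) = (· + c) '' connectedComponentIn s x := by
  have h := (Homeomorph.addRight c).image_connectedComponentIn hx
  simpa using h.symm

lemma gap_nonempty {ℓ : ℝ} {L : Set ℝ} (hL : L ∈ gapsIn ℓ) : L.Nonempty := by
  obtain ⟨x, hx, rfl⟩ := hL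
  exact ⟨x, mem_connectedComponentIn hx⟩

lemma gap_subset {ℓ : ℝ} {L : Set ℝ} (hL : L ∈ gapsIn ℓ) : L ⊆ Ioo 0 ℓ := by
  obtain ⟨x, hx, rfl⟩ := hL
  exact (connectedComponentIn_subset _ _).trans diff_subset

lemma gaps_rec {ℓ : ℝ} (hℓ : 0 < ℓ) :
    gapsIn ℓ = insert (Ioo (ℓ/3) (2*ℓ/3))
      (gapsIn (ℓ/3) ∪ (Set.image (· + 2*ℓ/3)) '' gapsIn (ℓ/3)) := by
  have hthird : ℓ/3 ∉ Uset ℓ := fun h => h.2 (third_mem_scaled ℓ)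
  have htwothird : 2*ℓ/3 ∉ Uset ℓ := fun h => h.2 (twothird_mem_scaled ℓ)
  have hzero : (0:ℝ) ∉ Uset ℓ := fun h => (lt_irrefl 0 h.1.1)
  have hell : ℓ ∉ Uset ℓ := fun h => (lt_irrefl ℓ h.1.2)
  ext L
  constructor
  · rintro ⟨x, hx, rfl⟩
    have hx' : x ∈ Uset ℓ := hx
    have hx0 : 0 < x := hx'.1.1
    have hxl : x < ℓ := hx'.1.2
    have hx3 : x ≠ ℓ/3 := fun h => hthird (h ▸ hx')
    have hx23 : x ≠ 2*ℓ/3 := fun h => htwothird (h ▸ hx')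
    rcases lt_or_gt_of_ne hx3 with h3 | h3
    · -- left piece
      right; left
      have heq : connectedComponentIn (Uset ℓ) x = connectedComponentIn (Uset (ℓ/3)) x := by
        rw [comp_loc (⟨hx0, h3⟩ : x ∈ Ioo 0 (ℓ/3)) hzero hthird, U_inter_left hℓ]
      have hxU : x ∈ Uset (ℓ/3) := by
        rw [← U_inter_left hℓ]; exact ⟨hx', hx0, h3⟩
      exact ⟨x, hxU, heq⟩
    · rcases lt_or_gt_of_ne hx23 with h23 | h23
      · -- middle
        left
        have hmid : x ∈ Ioo (ℓ/3) (2*ℓ/3) := ⟨h3, h23⟩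
        apply comp_Ioo _ hthird htwothird hmid
        rw [← U_inter_mid hℓ]
        exact inter_subset_left
      · -- right piece
        right; right
        have heq : connectedComponentIn (Uset ℓ) x
            = connectedComponentIn ((· + 2*ℓ/3) '' Uset (ℓ/3)) x := by
          rw [comp_loc (⟨h23, hxl⟩ : x ∈ Ioo (2*ℓ/3) ℓ) htwothird hell, U_inter_right hℓ]
        have hxU : x ∈ (· + 2*ℓ/3) '' Uset (ℓ/3) := by
          rw [← U_inter_right hℓ]; exact ⟨hx', h23, hxl⟩
        obtain ⟨y, hy, hyx⟩ := hxU
        refine ⟨connectedComponentIn (Uset (ℓ/3)) y, ⟨y, hy, rfl⟩, ?_⟩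
        have hyx' : y + 2*ℓ/3 = x := hyx
        show (· + 2*ℓ/3) '' connectedComponentIn (Uset (ℓ/3)) y = connectedComponentIn (Uset ℓ) x
        rw [heq, ← hyx', compTranslate17 _ _ _ hy]
  · intro hL
    rcases hL with hL | hL | ⟨L₀, ⟨y, hy, hL₀⟩, rfl⟩
    · subst hL
      have hmid : ℓ/2 ∈ Ioo (ℓ/3) (2*ℓ/3) := ⟨by linarith, by linarith⟩
      have hsub : Ioo (ℓ/3) (2*ℓ/3) ⊆ Uset ℓ := by
        rw [← U_inter_mid hℓ]; exact inter_subset_left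
      refine ⟨ℓ/2, hsub hmid, (comp_Ioo hsub hthird htwothird hmid).symm⟩
    · obtain ⟨x, hx, rfl⟩ := hL
      have hx' : x ∈ Uset (ℓ/3) := hx
      have hxIoo : x ∈ Ioo 0 (ℓ/3) := hx'.1
      have hxU : x ∈ Uset ℓ := by
        rw [← U_inter_left hℓ] at hx'; exact hx'.1
      refine ⟨x, hxU, ?_⟩
      show connectedComponentIn (Uset (ℓ/3)) x = connectedComponentIn (Uset ℓ) x
      rw [comp_loc hxIoo hzero hthird, U_inter_left hℓ]
    · subst hL₀
      have hy' : y ∈ Uset (ℓ/3) := hy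
      have hyIoo : y ∈ Ioo 0 (ℓ/3) := hy'.1
      have hxU : y + 2*ℓ/3 ∈ Uset ℓ := by
        have : y + 2*ℓ/3 ∈ (· + 2*ℓ/3) '' Uset (ℓ/3) := ⟨y, hy', rfl⟩
        rw [← U_inter_right hℓ] at this; exact this.1
      refine ⟨y + 2*ℓ/3, hxU, ?_⟩
      show (· + 2*ℓ/3) '' connectedComponentIn (Uset (ℓ/3)) y = connectedComponentIn (Uset ℓ) (y + 2*ℓ/3)
      have hIoo : y + 2*ℓ/3 ∈ Ioo (2*ℓ/3) ℓ := ⟨by linarith [hyIoo.1], by linarith [hyIoo.2]⟩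
      rw [comp_loc hIoo htwothird hell, U_inter_right hℓ, compTranslate17 _ _ _ hy']

lemma zpow3_pos (n : ℕ) : (0:ℝ) < 3 ^ (-(n:ℤ)) := by positivity

lemma zpow3_le {n : ℕ} (hn : 1 ≤ n) : (3:ℝ) ^ (-(n:ℤ)) ≤ 1/3 := by
  have h : (3:ℝ)^(-(n:ℤ)) ≤ 3^(-1:ℤ) := by
    apply zpow_le_zpow_right₀ (by norm_num)
    omega
  simpa using h

lemma zpow3_succ (n : ℕ) : (3:ℝ) ^ (-(n:ℤ) + 1) = 3 * 3 ^ (-(n:ℤ)) := by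
  rw [zpow_add_one₀ (by norm_num : (3:ℝ) ≠ 0)]
  ring

lemma whitney_subset {a b : ℝ} {J : Set ℝ} (hJ : J ∈ whitneyOf a b) (hab : a < b) :
    J ⊆ Ioo a b := by
  obtain ⟨n, hn, hJ | hJ⟩ := hJ <;> subst hJ <;> intro t ht <;>
    obtain ⟨h1, h2⟩ := ht <;>
    have hp := zpow3_pos n <;> have hle := zpow3_le hn <;>
    rw [zpow3_succ n] at * <;>
    constructor <;> nlinarith [sub_pos.mpr hab]

lemma whitney_vol {a b : ℝ} {J : Set ℝ} (hJ : J ∈ whitneyOf a b) (hab : a ≤ b) :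
    ∃ n : ℕ, 1 ≤ n ∧ MeasureTheory.volume J = ENNReal.ofReal (3 ^ (-(n:ℤ)) * (b - a)) := by
  obtain ⟨n, hn, hJ | hJ⟩ := hJ <;> subst hJ <;> refine ⟨n, hn, ?_⟩ <;>
    rw [Real.volume_Icc] <;> congr 1 <;> rw [zpow3_succ n] <;> ring

lemma whitney_translate (a b c : ℝ) :
    whitneyOf (a + c) (b + c) = (Set.image (· + c)) '' whitneyOf a b := by
  ext J
  simp only [whitneyOf, mem_setOf_eq, Set.mem_image]
  constructor
  · rintro ⟨n, hn, hJ | hJ⟩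
    · refine ⟨Icc (b - 3 ^ (-(n:ℤ) + 1) * (b - a) / 2) (b - 3 ^ (-(n:ℤ)) * (b - a) / 2),
        ⟨n, hn, Or.inl rfl⟩, ?_⟩
      rw [image_add_const_Icc, hJ]
      congr 1 <;> ring
    · refine ⟨Icc (a + 3 ^ (-(n:ℤ)) * (b - a) / 2) (a + 3 ^ (-(n:ℤ) + 1) * (b - a) / 2),
        ⟨n, hn, Or.inr rfl⟩, ?_⟩
      rw [image_add_const_Icc, hJ]
      congr 1 <;> ring
  · rintro ⟨J₀, ⟨n, hn, hJ | hJ⟩, rfl⟩ <;> subst hJ <;> refine ⟨n, hn, ?_⟩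
    · left
      rw [image_add_const_Icc]
      congr 1 <;> ring
    · right
      rw [image_add_const_Icc]
      congr 1 <;> ring

lemma Ioo_inj' {a b c d : ℝ} (hab : a < b) (h : Ioo a b = Ioo c d) : a = c ∧ b = d := by
  have hcd : c < d := nonempty_Ioo.mp (h ▸ nonempty_Ioo.mpr hab)
  exact ⟨by rw [← csInf_Ioo hab, h, csInf_Ioo hcd], by rw [← csSup_Ioo hab, h, csSup_Ioo hcd]⟩

lemma Icc_inj' {a b c d : ℝ} (hab : a ≤ b) (h : Icc a b = Icc c d) : a = c ∧ b = d := by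
  have hcd : c ≤ d := nonempty_Icc.mp (h ▸ nonempty_Icc.mpr hab)
  exact ⟨by rw [← csInf_Icc hab, h, csInf_Icc hcd], by rw [← csSup_Icc hab, h, csSup_Icc hcd]⟩

lemma whitney_vol_eq {a b : ℝ} {n : ℕ} (hn : 1 ≤ n) {J : Set ℝ}
    (hJ : J = Set.Icc (b - 3 ^ (-(n : ℤ) + 1) * (b - a) / 2) (b - 3 ^ (-(n : ℤ)) * (b - a) / 2) ∨
     J = Set.Icc (a + 3 ^ (-(n : ℤ)) * (b - a) / 2) (a + 3 ^ (-(n : ℤ) + 1) * (b - a) / 2)) :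
    MeasureTheory.volume J = ENNReal.ofReal (3 ^ (-(n:ℤ)) * (b - a)) := by
  rcases hJ with hJ | hJ <;> subst hJ <;> rw [Real.volume_Icc] <;> congr 1 <;>
    rw [zpow3_succ n] <;> ring

lemma whitney_filter {a b : ℝ} (hab : a < b) {k : ℕ} (hk : 1 ≤ k) :
    {J | J ∈ whitneyOf a b ∧
        MeasureTheory.volume J = ENNReal.ofReal (3 ^ (-(k:ℤ)) * (b - a))} =
      {Icc (b - 3 ^ (-(k:ℤ) + 1) * (b - a) / 2) (b - 3 ^ (-(k:ℤ)) * (b - a) / 2),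
       Icc (a + 3 ^ (-(k:ℤ)) * (b - a) / 2) (a + 3 ^ (-(k:ℤ) + 1) * (b - a) / 2)} := by
  have hba : (0:ℝ) < b - a := sub_pos.mpr hab
  ext J
  simp only [mem_setOf_eq, mem_insert_iff, mem_singleton_iff]
  constructor
  · rintro ⟨⟨n, hn, hJ⟩, hvol⟩
    rw [whitney_vol_eq hn hJ, ENNReal.ofReal_eq_ofReal_iff
      (by positivity) (by positivity)] at hvol
    have hnk : (3:ℝ) ^ (-(n:ℤ)) = 3 ^ (-(k:ℤ)) := mul_right_cancel₀ hba.ne' hvol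
    have : n = k := by
      have := zpow_right_injective₀ (by norm_num : (0:ℝ) < 3) (by norm_num : (3:ℝ) ≠ 1) hnk
      omega
    subst this
    exact hJ
  · rintro (hJ | hJ)
    · exact ⟨⟨k, hk, Or.inl hJ⟩, whitney_vol_eq hk (Or.inl hJ)⟩
    · exact ⟨⟨k, hk, Or.inr hJ⟩, whitney_vol_eq hk (Or.inr hJ)⟩

lemma whitney_pair_ne {a b : ℝ} (hab : a < b) {k : ℕ} (hk : 1 ≤ k) :
    Icc (b - 3 ^ (-(k:ℤ) + 1) * (b - a) / 2) (b - 3 ^ (-(k:ℤ)) * (b - a) / 2) ≠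
      Icc (a + 3 ^ (-(k:ℤ)) * (b - a) / 2) (a + 3 ^ (-(k:ℤ) + 1) * (b - a) / 2) := by
  intro h
  have hba : (0:ℝ) < b - a := sub_pos.mpr hab
  have hp := zpow3_pos k
  have hle := zpow3_le hk
  have hord : b - 3 ^ (-(k:ℤ) + 1) * (b - a) / 2 ≤ b - 3 ^ (-(k:ℤ)) * (b - a) / 2 := by
    rw [zpow3_succ k]; nlinarith
  obtain ⟨h1, h2⟩ := Icc_inj' hord h
  rw [zpow3_succ k] at h1 h2
  nlinarith

def Sk (k : ℕ) (ℓ : ℝ) : Set (Set ℝ) :=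
  {J | (∃ L ∈ gapsIn ℓ, ∃ a b : ℝ, L = Set.Ioo a b ∧ J ∈ whitneyOf a b) ∧
    MeasureTheory.volume J = ENNReal.ofReal (3 ^ (-(k:ℤ)) * ℓ)}

lemma nonempty_of_vol {J : Set ℝ} {r : ℝ} (hr : 0 < r)
    (h : MeasureTheory.volume J = ENNReal.ofReal r) : J.Nonempty := by
  rw [nonempty_iff_ne_empty]
  rintro rfl
  rw [MeasureTheory.measure_empty] at h
  have := ENNReal.ofReal_eq_zero.mp h.symm
  linarith

lemma vol_image_translate {J : Set ℝ} {a b : ℝ} (hJ : J ∈ whitneyOf a b) (c : ℝ) :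
    MeasureTheory.volume ((· + c) '' J) = MeasureTheory.volume J := by
  obtain ⟨n, hn, hJ | hJ⟩ := hJ <;> subst hJ <;>
    rw [image_add_const_Icc, Real.volume_Icc, Real.volume_Icc] <;> congr 1 <;> ring

lemma Sk_subset {k : ℕ} {ℓ : ℝ} {J : Set ℝ} (hJ : J ∈ Sk k ℓ) : J ⊆ Ioo 0 ℓ := by
  obtain ⟨⟨L, hL, a, b, rfl, hw⟩, _⟩ := hJ
  have hab : a < b := nonempty_Ioo.mp (gap_nonempty hL)
  exact (whitney_subset hw hab).trans (gap_subset hL)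

lemma harg {k : ℕ} (ℓ : ℝ) : (3:ℝ) ^ (-((k+1:ℕ):ℤ)) * ℓ = 3 ^ (-(k:ℤ)) * (ℓ/3) := by
  have h : -((k+1:ℕ):ℤ) = -(k:ℤ) + (-1) := by push_cast; ring
  rw [h, zpow_add₀ (by norm_num : (3:ℝ) ≠ 0)]
  norm_num
  ring

lemma gap_len {ℓ : ℝ} (hℓ : 0 < ℓ) {L : Set ℝ} (hL : L ∈ gapsIn ℓ) {a b : ℝ}
    (h : L = Ioo a b) (hab : a < b) : b - a ≤ ℓ/3 := by
  subst h
  rw [gaps_rec hℓ] at hL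
  rcases hL with hL | hL | ⟨L₀, hL₀, hLeq⟩
  · obtain ⟨h1, h2⟩ := Ioo_inj' hab hL
    linarith [h1, h2]
  · have := (Ioo_subset_Ioo_iff hab).mp (gap_subset hL)
    linarith [this.1, this.2]
  · have hL₀' : L₀ = (· + 2*ℓ/3) ⁻¹' (Ioo a b) := by
      rw [← hLeq, preimage_image_eq _ (add_left_injective _)]
    rw [preimage_add_const_Ioo] at hL₀'
    have := (Ioo_subset_Ioo_iff (by linarith : a - 2*ℓ/3 < b - 2*ℓ/3)).mp
      (hL₀' ▸ gap_subset hL₀)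
    linarith [this.1, this.2]

lemma Sk_one {ℓ : ℝ} (hℓ : 0 < ℓ) : Sk 1 ℓ = ∅ := by
  ext J
  simp only [Sk, mem_setOf_eq, mem_empty_iff_false, iff_false, not_and]
  rintro ⟨L, hL, a, b, rfl, hw⟩ hvol
  have hab : a < b := nonempty_Ioo.mp (gap_nonempty hL)
  have hlen := gap_len hℓ hL rfl hab
  obtain ⟨n, hn, hv⟩ := whitney_vol hw hab.le
  rw [hv, ENNReal.ofReal_eq_ofReal_iff
    (mul_nonneg (zpow3_pos n).le (by linarith)) (mul_nonneg (by positivity) hℓ.le)] at hvol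
  have h1 := zpow3_le hn
  have h2 := zpow3_pos n
  have h3 : ((1:ℕ):ℤ) = 1 := rfl
  rw [h3] at hvol
  have h4 : (3:ℝ) ^ (-1:ℤ) = 1/3 := by norm_num
  rw [h4] at hvol
  nlinarith

lemma Sk_succ {k : ℕ} (hℓpos : (0:ℝ) < 1) {ℓ : ℝ} (hℓ : 0 < ℓ) :
    Sk (k+1) ℓ =
      {J | J ∈ whitneyOf (ℓ/3) (2*ℓ/3) ∧
          MeasureTheory.volume J = ENNReal.ofReal (3 ^ (-((k+1:ℕ)):ℤ) * ℓ)} ∪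
        (Sk k (ℓ/3) ∪ (Set.image (· + 2*ℓ/3)) '' Sk k (ℓ/3)) := by
  ext J
  constructor
  · rintro ⟨⟨L, hL, a, b, rfl, hw⟩, hvol⟩
    rw [gaps_rec hℓ] at hL
    rcases hL with hL | hL | ⟨L₀, hL₀, hLeq⟩
    · obtain ⟨h1, h2⟩ := Ioo_inj' (nonempty_Ioo.mp ((hL ▸ nonempty_Ioo.mpr
        (by linarith : ℓ/3 < 2*ℓ/3)) : (Ioo a b).Nonempty)) hL
      subst h1; subst h2
      exact Or.inl ⟨hw, hvol⟩
    · refine Or.inr (Or.inl ⟨⟨_, hL, a, b, rfl, hw⟩, ?_⟩)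
      rwa [harg ℓ] at hvol
    · have hL₀' : L₀ = Ioo (a - 2*ℓ/3) (b - 2*ℓ/3) := by
        rw [← preimage_add_const_Ioo, ← hLeq, preimage_image_eq _ (add_left_injective _)]
      have hw' : J ∈ whitneyOf ((a - 2*ℓ/3) + 2*ℓ/3) ((b - 2*ℓ/3) + 2*ℓ/3) := by
        have e1 : (a - 2*ℓ/3) + 2*ℓ/3 = a := by ring
        have e2 : (b - 2*ℓ/3) + 2*ℓ/3 = b := by ring
        rw [e1, e2]; exact hw
      rw [whitney_translate] at hw'
      obtain ⟨J₀, hJ₀, rfl⟩ := hw'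
      refine Or.inr (Or.inr ⟨J₀, ⟨⟨L₀, hL₀, _, _, hL₀', hJ₀⟩, ?_⟩, rfl⟩)
      rw [vol_image_translate hJ₀ _] at hvol
      rwa [harg ℓ] at hvol
  · rintro (⟨hw, hvol⟩ | ⟨⟨L, hL, a, b, hLeq, hw⟩, hvol⟩ | ⟨J₀, ⟨⟨L, hL, a, b, hLeq, hw⟩, hvol⟩, rfl⟩)
    · refine ⟨⟨Ioo (ℓ/3) (2*ℓ/3), ?_, ℓ/3, 2*ℓ/3, rfl, hw⟩, hvol⟩
      rw [gaps_rec hℓ]; exact mem_insert _ _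
    · refine ⟨⟨L, ?_, a, b, hLeq, hw⟩, ?_⟩
      · rw [gaps_rec hℓ]; exact mem_insert_of_mem _ (Or.inl hL)
      · rwa [harg ℓ]
    · refine ⟨⟨(· + 2*ℓ/3) '' L, ?_, a + 2*ℓ/3, b + 2*ℓ/3, ?_, ?_⟩, ?_⟩
      · rw [gaps_rec hℓ]; exact mem_insert_of_mem _ (Or.inr ⟨L, hL, rfl⟩)
      · rw [hLeq, image_add_const_Ioo]
      · rw [whitney_translate]; exact ⟨J₀, hw, rfl⟩
      · rw [vol_image_translate hw _, hvol, harg ℓ]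

lemma Sk_main : ∀ k, 1 ≤ k → ∀ ℓ : ℝ, 0 < ℓ → (Sk k ℓ).Finite ∧ (Sk k ℓ).ncard = 2^k - 2 := by
  intro k hk
  induction k, hk using Nat.le_induction with
  | base =>
    intro ℓ hℓ
    rw [Sk_one hℓ]
    simp
  | succ k hk ih =>
    intro ℓ hℓ
    have hℓ3 : 0 < ℓ/3 := by linarith
    have hab : ℓ/3 < 2*ℓ/3 := by linarith
    obtain ⟨hBfin, hBcard⟩ := ih (ℓ/3) hℓ3
    set c := 2*ℓ/3 with hc
    set A : Set (Set ℝ) := {J | J ∈ whitneyOf (ℓ/3) (2*ℓ/3) ∧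
        MeasureTheory.volume J = ENNReal.ofReal (3 ^ (-((k+1:ℕ)):ℤ) * ℓ)} with hA
    set B : Set (Set ℝ) := Sk k (ℓ/3) with hB
    set C : Set (Set ℝ) := (Set.image (· + c)) '' Sk k (ℓ/3) with hC
    have hinj : Function.Injective (Set.image ((· + c) : ℝ → ℝ)) :=
      Set.image_injective.mpr (add_left_injective _)
    have hApair : A = {Icc (2*ℓ/3 - 3 ^ (-(k:ℤ) + 1) * (2*ℓ/3 - ℓ/3) / 2)
          (2*ℓ/3 - 3 ^ (-(k:ℤ)) * (2*ℓ/3 - ℓ/3) / 2),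
        Icc (ℓ/3 + 3 ^ (-(k:ℤ)) * (2*ℓ/3 - ℓ/3) / 2)
          (ℓ/3 + 3 ^ (-(k:ℤ) + 1) * (2*ℓ/3 - ℓ/3) / 2)} := by
      rw [hA, show ENNReal.ofReal (3 ^ (-((k+1:ℕ)):ℤ) * ℓ)
          = ENNReal.ofReal (3 ^ (-(k:ℤ)) * (2*ℓ/3 - ℓ/3)) from by rw [harg ℓ]; ring_nf,
        whitney_filter hab hk]
    have hAfin : A.Finite := by rw [hApair]; exact (finite_singleton _).insert _
    have hAcard : A.ncard = 2 := by
      rw [hApair]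
      exact Set.ncard_pair (whitney_pair_ne hab hk)
    have hCfin : C.Finite := hBfin.image _
    have hCcard : C.ncard = 2^k - 2 := by
      rw [hC, Set.ncard_image_of_injective _ hinj, hBcard]
    -- subsets
    have hAsub : ∀ J ∈ A, J ⊆ Ioo (ℓ/3) (2*ℓ/3) := fun J hJ => whitney_subset hJ.1 hab
    have hAne : ∀ J ∈ A, J.Nonempty := fun J hJ =>
      nonempty_of_vol (mul_pos (zpow3_pos (k+1)) hℓ) hJ.2
    have hBsub : ∀ J ∈ B, J ⊆ Ioo 0 (ℓ/3) := fun J hJ => Sk_subset hJ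
    have hBne : ∀ J ∈ B, J.Nonempty := fun J hJ =>
      nonempty_of_vol (mul_pos (zpow3_pos k) hℓ3) hJ.2
    have hCsub : ∀ J ∈ C, J ⊆ Ioo (2*ℓ/3) ℓ := by
      rintro J ⟨J₀, hJ₀, rfl⟩
      rintro t ⟨s, hs, rfl⟩
      have := Sk_subset hJ₀ hs
      exact ⟨by simp only [hc]; linarith [this.1], by simp only [hc]; linarith [this.2]⟩
    have hCne : ∀ J ∈ C, J.Nonempty := by
      rintro J ⟨J₀, hJ₀, rfl⟩
      exact (nonempty_of_vol (mul_pos (zpow3_pos k) hℓ3) hJ₀.2).image _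
    have hdAB : Disjoint A B := by
      rw [Set.disjoint_left]
      intro J hJA hJB
      obtain ⟨t, ht⟩ := hAne J hJA
      exact absurd ((hBsub J hJB ht).2) (not_lt.mpr (hAsub J hJA ht).1.le)
    have hdAC : Disjoint A C := by
      rw [Set.disjoint_left]
      intro J hJA hJC
      obtain ⟨t, ht⟩ := hAne J hJA
      exact absurd ((hCsub J hJC ht).1) (not_lt.mpr (hAsub J hJA ht).2.le)
    have hdBC : Disjoint B C := by
      rw [Set.disjoint_left]
      intro J hJB hJC
      obtain ⟨t, ht⟩ := hBne J hJB
      have h1 := (hBsub J hJB ht).2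
      have h2 := (hCsub J hJC ht).1
      linarith
    have hseq := Sk_succ (by norm_num) hℓ (k := k)
    constructor
    · rw [hseq]
      exact hAfin.union (hBfin.union hCfin)
    · rw [hseq, Set.ncard_union_eq (by
          rw [Set.disjoint_union_right]; exact ⟨hdAB, hdAC⟩) hAfin (hBfin.union hCfin),
        Set.ncard_union_eq hdBC hBfin hCfin, hAcard, hBcard, hCcard]
      have h2k : 2 ≤ 2^k := by
        calc (2:ℕ) = 2^1 := rfl
        _ ≤ 2^k := Nat.pow_le_pow_right (by norm_num) hk
      have hp : 2^(k+1) = 2*2^k := by rw [pow_succ]; ring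
      omega

/-- `E` (of length `|E| = 2ℓ`) contains exactly `2^k` Whitney intervals of length
`2⁻¹·3^{-k}|E|` for each `k ≥ 1`, and their total length is `(1/2)·(2/3)^k·|E|`. -/
theorem stmt17 (ℓ : ℝ) (hℓ : 0 < ℓ) (k : ℕ) (hk : 1 ≤ k) :
    {J ∈ whitneyE ℓ |
        MeasureTheory.volume J = ENNReal.ofReal (2⁻¹ * 3 ^ (-(k : ℤ)) * (2 * ℓ))}.ncard
      = 2 ^ k ∧
    (2 ^ k : ℝ) * (2⁻¹ * 3 ^ (-(k : ℤ)) * (2 * ℓ)) = (1 / 2) * (2 / 3) ^ k * (2 * ℓ) := by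
  have h2k : 2 ≤ 2^k := by
    calc (2:ℕ) = 2^1 := rfl
    _ ≤ 2^k := Nat.pow_le_pow_right (by norm_num) hk
  constructor
  · set D : Set (Set ℝ) := {J | J ∈ whitneyOf ℓ (2*ℓ) ∧
        MeasureTheory.volume J = ENNReal.ofReal (3 ^ (-(k:ℤ)) * ℓ)} with hD
    have hsplit : {J ∈ whitneyE ℓ |
        MeasureTheory.volume J = ENNReal.ofReal (2⁻¹ * 3 ^ (-(k : ℤ)) * (2 * ℓ))}
        = Sk k ℓ ∪ D := by
      have he : (2:ℝ)⁻¹ * 3 ^ (-(k : ℤ)) * (2 * ℓ) = 3 ^ (-(k:ℤ)) * ℓ := by ring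
      ext J
      simp only [whitneyE, Sk, hD, mem_setOf_eq, mem_union, he]
      constructor
      · rintro ⟨hw | hw, hv⟩
        · exact Or.inl ⟨hw, hv⟩
        · exact Or.inr ⟨hw, hv⟩
      · rintro (⟨hw, hv⟩ | ⟨hw, hv⟩)
        · exact ⟨Or.inl hw, hv⟩
        · exact ⟨Or.inr hw, hv⟩
    have hl2 : ℓ < 2*ℓ := by linarith
    have hDpair : D = {Icc (2*ℓ - 3 ^ (-(k:ℤ) + 1) * (2*ℓ - ℓ) / 2)
          (2*ℓ - 3 ^ (-(k:ℤ)) * (2*ℓ - ℓ) / 2),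
        Icc (ℓ + 3 ^ (-(k:ℤ)) * (2*ℓ - ℓ) / 2) (ℓ + 3 ^ (-(k:ℤ) + 1) * (2*ℓ - ℓ) / 2)} := by
      rw [hD, show ENNReal.ofReal (3 ^ (-(k:ℤ)) * ℓ)
          = ENNReal.ofReal (3 ^ (-(k:ℤ)) * (2*ℓ - ℓ)) from by ring_nf,
        whitney_filter hl2 hk]
    have hDfin : D.Finite := by rw [hDpair]; exact (finite_singleton _).insert _
    have hDcard : D.ncard = 2 := by
      rw [hDpair]; exact Set.ncard_pair (whitney_pair_ne hl2 hk)
    obtain ⟨hSfin, hScard⟩ := Sk_main k hk ℓ hℓ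
    have hdisj : Disjoint (Sk k ℓ) D := by
      rw [Set.disjoint_left]
      intro J hJS hJD
      obtain ⟨t, ht⟩ := nonempty_of_vol (mul_pos (zpow3_pos k) hℓ) hJD.2
      have h1 := (Sk_subset hJS ht).2
      have h2 := (whitney_subset hJD.1 hl2 ht).1
      linarith
    rw [hsplit, Set.ncard_union_eq hdisj hSfin hDfin, hScard, hDcard]
    omega
  · rw [zpow_neg, zpow_natCast, div_pow]
    field_simp
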